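/- Let P > 0 and v ≥ 0 be real numbers, and let A be a real number with 0 < A < 2P + v. Define h : (−∞, 0) → ℝ by h(θ) = θ A − (P + v) θ / (1 − θ P) + log(1 − θ P), and set θ* = (2A − P − √(P² + 4A(P + v))) / (2AP). Then θ* < 0 and h(θ) ≤ h(θ*) for all θ < 0; that is, h attains its maximum over (−∞, 0) at θ*. -/

import Mathlib

set_option maxHeartbeats 1000000 in
/-- Maximization of the GMI objective of the identity decoding rule for the phase noise
channel: for `P > 0`, `v ≥ 0` and `0 < A < 2P + v`, the function
`h θ = θ A - (P + v) θ / (1 - θ P) + log (1 - θ P)` attains its maximum over `(-∞, 0)` at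
`θ* = (2A - P - √(P² + 4A(P + v))) / (2AP)`, and `θ* < 0`. -/
theorem identity_rule_gmi_argmax (P v A : ℝ) (hP : 0 < P) (hv : 0 ≤ v)
    (hA : 0 < A) (hA' : A < 2 * P + v)
    (h : ℝ → ℝ)
    (hh : ∀ θ : ℝ, h θ = θ * A - (P + v) * θ / (1 - θ * P) + Real.log (1 - θ * P))
    (θs : ℝ)
    (hθs : θs = (2 * A - P - Real.sqrt (P ^ 2 + 4 * A * (P + v))) / (2 * A * P)) :
    θs < 0 ∧ ∀ θ : ℝ, θ < 0 → h θ ≤ h θs := by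
  have hfun : h = fun θ => θ * A - (P + v) * θ / (1 - θ * P) + Real.log (1 - θ * P) :=
    funext hh
  set S := Real.sqrt (P ^ 2 + 4 * A * (P + v)) with hSdef
  have hpos : 0 < P ^ 2 + 4 * A * (P + v) := by positivity
  have hS2 : S ^ 2 = P ^ 2 + 4 * A * (P + v) := Real.sq_sqrt hpos.le
  have hS0 : 0 < S := Real.sqrt_pos.mpr hpos
  have hSP : P < S := by nlinarith
  have hSgt : 2 * A - P < S := by
    by_contra hc
    push_neg at hc
    nlinarith [mul_le_mul hc hc hS0.le (le_trans hS0.le hc)]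
  have hθs0 : θs < 0 := by
    rw [hθs]
    apply div_neg_of_neg_of_pos
    · linarith
    · positivity
  refine ⟨hθs0, ?_⟩
  -- the critical value of u = 1 - θ P
  set t : ℝ := (P + S) / (2 * A) with htdef
  have ht : 2 * A * t = P + S := by rw [htdef]; field_simp
  have ht0 : 0 < t := by positivity
  have hus : 1 - θs * P = t := by
    rw [hθs, htdef]; field_simp; ring
  have hAus : A * t ^ 2 - P * t - (P + v) = 0 := by
    have h2A : (2 * A) ^ 2 ≠ 0 := by positivity
    field_simp [htdef]
    nlinarith [hS2]
  -- derivative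
  have hderiv : ∀ x : ℝ, x < 0 →
      HasDerivAt h (A - (P + v) / (1 - x * P) ^ 2 - P / (1 - x * P)) x := by
    intro x hx
    have hu : 0 < 1 - x * P := by nlinarith
    have h1 : HasDerivAt (fun θ : ℝ => θ * A) A x := by
      simpa using (hasDerivAt_id x).mul_const A
    have hg : HasDerivAt (fun θ : ℝ => 1 - θ * P) (-P) x := by
      simpa using ((hasDerivAt_id x).mul_const P).const_sub 1
    have h2 : HasDerivAt (fun θ : ℝ => (P + v) * θ / (1 - θ * P))
        ((P + v) / (1 - x * P) ^ 2) x := by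
      have hf : HasDerivAt (fun θ : ℝ => (P + v) * θ) (P + v) x := by
        simpa using (hasDerivAt_id x).const_mul (P + v)
      have := hf.div hg hu.ne'
      refine this.congr_deriv ?_
      congr 1
      ring
    have h3 : HasDerivAt (fun θ : ℝ => Real.log (1 - θ * P)) (-P / (1 - x * P)) x :=
      hg.log hu.ne'
    have hcomb := (h1.sub h2).add h3
    rw [hfun]
    refine hcomb.congr_deriv ?_
    ring
  -- sign of derivative left of θs
  have hsignpos : ∀ x : ℝ, x < θs →
      0 < A - (P + v) / (1 - x * P) ^ 2 - P / (1 - x * P) := by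
    intro x hx
    set u : ℝ := 1 - x * P with hudef
    have hugt : t < u := by
      rw [← hus, hudef]
      nlinarith
    have hu0 : 0 < u := lt_trans ht0 hugt
    have h1 : 0 < u - t := by linarith
    have h2 : 0 < A * u + A * t - P := by nlinarith
    have hq : 0 < A * u ^ 2 - P * u - (P + v) := by nlinarith [mul_pos h1 h2]
    have heq : A - (P + v) / u ^ 2 - P / u = (A * u ^ 2 - P * u - (P + v)) / u ^ 2 := by
      field_simp
      ring
    rw [heq]
    exact div_pos hq (by positivity)
  -- sign of derivative right of θs
  have hsignneg : ∀ x : ℝ, θs < x → x < 0 →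
      A - (P + v) / (1 - x * P) ^ 2 - P / (1 - x * P) < 0 := by
    intro x hx hx0
    set u : ℝ := 1 - x * P with hudef
    have hult : u < t := by
      rw [← hus, hudef]
      nlinarith
    have hu1 : 1 < u := by rw [hudef]; nlinarith
    have hu0 : 0 < u := by linarith
    have h1 : 0 < t - u := by linarith
    have h2 : 0 < A * u + A * t - P := by nlinarith
    have hq : A * u ^ 2 - P * u - (P + v) < 0 := by nlinarith [mul_pos h1 h2]
    have heq : A - (P + v) / u ^ 2 - P / u = (A * u ^ 2 - P * u - (P + v)) / u ^ 2 := by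
      field_simp
      ring
    rw [heq]
    exact div_neg_of_neg_of_pos hq (by positivity)
  intro θ hθ
  rcases lt_trichotomy θ θs with hlt | heq | hgt
  · have hmono : StrictMonoOn h (Set.Icc θ θs) := by
      apply strictMonoOn_of_deriv_pos (convex_Icc _ _)
      · intro x hx
        exact ((hderiv x (lt_of_le_of_lt hx.2 hθs0)).differentiableAt.continuousAt).continuousWithinAt
      · intro x hx
        rw [interior_Icc] at hx
        rw [(hderiv x (hx.2.trans hθs0)).deriv]
        exact hsignpos x hx.2
    exact (hmono ⟨le_refl θ, hlt.le⟩ ⟨hlt.le, le_refl θs⟩ hlt).le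
  · rw [heq]
  · have hanti : StrictAntiOn h (Set.Icc θs θ) := by
      apply strictAntiOn_of_deriv_neg (convex_Icc _ _)
      · intro x hx
        exact ((hderiv x (lt_of_le_of_lt hx.2 hθ)).differentiableAt.continuousAt).continuousWithinAt
      · intro x hx
        rw [interior_Icc] at hx
        rw [(hderiv x (hx.2.trans hθ)).deriv]
        exact hsignneg x hx.1 (hx.2.trans hθ)
    exact (hanti ⟨le_refl θs, hgt.le⟩ ⟨hgt.le, le_refl θ⟩ hgt).le
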